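/- Let (R, m) be a quasi-local commutative ring with m² = (0). Then R is a Gaussian ring: for all polynomials f, g ∈ R[X], c(fg) = c(f)·c(g). -/

import Mathlib

open Polynomial

/-- A proper ideal `I` is `n`-absorbing if whenever a product of `n+1` elements lies in `I`,
the product of some `n` of them lies in `I`. -/
def IsNAbsorbing {R : Type*} [CommRing R] (I : Ideal R) (n : ℕ) : Prop :=
  I ≠ ⊤ ∧ ∀ x : Fin (n + 1) → R, (∏ i, x i) ∈ I →
    ∃ j, (∏ i ∈ Finset.univ.erase j, x i) ∈ I

/-- A proper ideal `I` is strongly `n`-absorbing if whenever a product of `n+1` ideals is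
contained in `I`, the product of some `n` of them is contained in `I`. -/
def IsStronglyNAbsorbing {R : Type*} [CommRing R] (I : Ideal R) (n : ℕ) : Prop :=
  I ≠ ⊤ ∧ ∀ J : Fin (n + 1) → Ideal R, (∏ i, J i) ≤ I →
    ∃ j, (∏ i ∈ Finset.univ.erase j, J i) ≤ I

/-- The content of a polynomial: the ideal generated by its coefficients. -/
def polyContent {R : Type*} [CommRing R] (f : R[X]) : Ideal R :=
  Ideal.span (Set.range f.coeff)

lemma mem_polyContent {R : Type*} [CommRing R] (f : R[X]) (n : ℕ) :
    f.coeff n ∈ polyContent f := Ideal.subset_span ⟨n, rfl⟩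

lemma polyContent_le_iff {R : Type*} [CommRing R] {f : R[X]} {I : Ideal R} :
    polyContent f ≤ I ↔ ∀ n, f.coeff n ∈ I := by
  rw [polyContent, Ideal.span_le]
  constructor
  · intro h n; exact h ⟨n, rfl⟩
  · rintro h x ⟨n, rfl⟩; exact h n

lemma polyContent_mul_le {R : Type*} [CommRing R] (f g : R[X]) :
    polyContent (f * g) ≤ polyContent f * polyContent g := by
  rw [polyContent_le_iff]
  intro n
  rw [coeff_mul]
  exact Ideal.sum_mem _ fun c _ =>
    Ideal.mul_mem_mul (mem_polyContent f c.1) (mem_polyContent g c.2)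

lemma isUnit_add_of_mem_max {R : Type*} [CommRing R] [IsLocalRing R] {u x : R}
    (hu : IsUnit u) (hx : x ∈ IsLocalRing.maximalIdeal R) : IsUnit (u + x) := by
  by_contra h
  have hmem : u + x ∈ IsLocalRing.maximalIdeal R :=
    (IsLocalRing.mem_maximalIdeal _).mpr h
  have hu' : u ∈ IsLocalRing.maximalIdeal R := by
    have := Ideal.sub_mem _ hmem hx
    simpa using this
  exact (IsLocalRing.maximalIdeal.isMaximal R).ne_top
    (Ideal.eq_top_of_isUnit_mem _ hu' hu)

lemma coeff_mem_polyContent_mul {R : Type*} [CommRing R] [IsLocalRing R]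
    (hm : (IsLocalRing.maximalIdeal R) ^ 2 = ⊥) {f : R[X]} (g : R[X])
    (hf : ∃ n, IsUnit (f.coeff n))
    (hg : ∀ q, g.coeff q ∈ IsLocalRing.maximalIdeal R) :
    ∀ n, g.coeff n ∈ polyContent (f * g) := by
  classical
  set i := Nat.find hf with hidef
  have hui : IsUnit (f.coeff i) := Nat.find_spec hf
  have hmin : ∀ p, p < i → f.coeff p ∈ IsLocalRing.maximalIdeal R := fun p hp =>
    (IsLocalRing.mem_maximalIdeal _).mpr (Nat.find_min hf hp)
  intro n
  induction n using Nat.strong_induction_on with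
  | _ n ih =>
    have key : f.coeff i * g.coeff n ∈ polyContent (f * g) := by
      have hmem : ((i, n) : ℕ × ℕ) ∈ Finset.HasAntidiagonal.antidiagonal (i + n) := by simp
      have hsplit := Finset.add_sum_erase _
        (fun c : ℕ × ℕ => f.coeff c.1 * g.coeff c.2) hmem
      have heq : f.coeff i * g.coeff n = (f * g).coeff (i + n) -
          ∑ c ∈ (Finset.HasAntidiagonal.antidiagonal (i + n)).erase (i, n),
            f.coeff c.1 * g.coeff c.2 := by
        rw [coeff_mul, ← hsplit]; ring
      rw [heq]
      refine Ideal.sub_mem _ (mem_polyContent _ _) (Ideal.sum_mem _ ?_)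
      rintro ⟨p, q⟩ hpq
      obtain ⟨hne, hpq'⟩ := Finset.mem_erase.mp hpq
      rw [Finset.HasAntidiagonal.mem_antidiagonal] at hpq'
      rcases lt_trichotomy p i with h | h | h
      · have h0 : f.coeff p * g.coeff q = 0 := by
          have hmm : f.coeff p * g.coeff q ∈ (IsLocalRing.maximalIdeal R) ^ 2 := by
            rw [pow_two]; exact Ideal.mul_mem_mul (hmin p h) (hg q)
          rwa [hm, Ideal.mem_bot] at hmm
        rw [h0]; exact Ideal.zero_mem _
      · exfalso; apply hne; subst h
        have : q = n := by omega
        subst this; rfl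
      · have hq : q < n := by omega
        exact Ideal.mul_mem_left _ _ (ih q hq)
    obtain ⟨u, hu⟩ := hui
    have hgn : g.coeff n = ↑u⁻¹ * (f.coeff i * g.coeff n) := by
      rw [← hu, ← mul_assoc, Units.inv_mul, one_mul]
    rw [hgn]
    exact Ideal.mul_mem_left _ _ key

lemma isUnit_coeff_mul {R : Type*} [CommRing R] [IsLocalRing R]
    {f g : R[X]} (hf : ∃ n, IsUnit (f.coeff n)) (hg : ∃ n, IsUnit (g.coeff n)) :
    ∃ n, IsUnit ((f * g).coeff n) := by
  classical
  set i := Nat.find hf with hidef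
  set j := Nat.find hg with hjdef
  have hui : IsUnit (f.coeff i) := Nat.find_spec hf
  have huj : IsUnit (g.coeff j) := Nat.find_spec hg
  refine ⟨i + j, ?_⟩
  have hmem : ((i, j) : ℕ × ℕ) ∈ Finset.HasAntidiagonal.antidiagonal (i + j) := by simp
  have hsplit := Finset.add_sum_erase _
    (fun c : ℕ × ℕ => f.coeff c.1 * g.coeff c.2) hmem
  have heq : (f * g).coeff (i + j) = f.coeff i * g.coeff j +
      ∑ c ∈ (Finset.HasAntidiagonal.antidiagonal (i + j)).erase (i, j),
        f.coeff c.1 * g.coeff c.2 := by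
    rw [coeff_mul, ← hsplit]
  rw [heq]
  refine isUnit_add_of_mem_max (hui.mul huj) (Ideal.sum_mem _ ?_)
  rintro ⟨p, q⟩ hpq
  obtain ⟨hne, hpq'⟩ := Finset.mem_erase.mp hpq
  rw [Finset.HasAntidiagonal.mem_antidiagonal] at hpq'
  rcases lt_trichotomy p i with h | h | h
  · exact Ideal.mul_mem_right _ _
      ((IsLocalRing.mem_maximalIdeal _).mpr (Nat.find_min hf h))
  · exfalso; apply hne; subst h
    have : q = j := by omega
    subst this; rfl
  · have hq : q < j := by omega
    exact Ideal.mul_mem_left _ _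
      ((IsLocalRing.mem_maximalIdeal _).mpr (Nat.find_min hg hq))

/-- A quasi-local ring whose maximal ideal squares to zero is Gaussian. -/
theorem polyContent_mul_of_local_sq_zero {R : Type*} [CommRing R] [IsLocalRing R]
    (hm : (IsLocalRing.maximalIdeal R) ^ 2 = ⊥) (f g : R[X]) :
    polyContent (f * g) = polyContent f * polyContent g := by
  classical
  by_cases hf : polyContent f ≤ IsLocalRing.maximalIdeal R
  · by_cases hg : polyContent g ≤ IsLocalRing.maximalIdeal R
    · have h1 : polyContent f * polyContent g = ⊥ := by
        rw [← le_bot_iff, ← hm, pow_two]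
        exact Ideal.mul_mono hf hg
      rw [h1, ← le_bot_iff, ← h1]
      exact polyContent_mul_le f g
    · have hgu : ∃ n, IsUnit (g.coeff n) := by
        by_contra h
        push_neg at h
        exact hg (polyContent_le_iff.mpr fun n =>
          (IsLocalRing.mem_maximalIdeal _).mpr (h n))
      have hfc : ∀ q, f.coeff q ∈ IsLocalRing.maximalIdeal R :=
        fun q => polyContent_le_iff.mp hf q
      have hle : polyContent f ≤ polyContent (f * g) := by
        rw [mul_comm]
        exact polyContent_le_iff.mpr (coeff_mem_polyContent_mul hm f hgu hfc)
      have hgt : polyContent g = ⊤ := by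
        obtain ⟨n, hn⟩ := hgu
        exact Ideal.eq_top_of_isUnit_mem _ (mem_polyContent g n) hn
      refine le_antisymm (polyContent_mul_le f g) ?_
      rw [hgt, Ideal.mul_top]
      exact hle
  · by_cases hg : polyContent g ≤ IsLocalRing.maximalIdeal R
    · have hfu : ∃ n, IsUnit (f.coeff n) := by
        by_contra h
        push_neg at h
        exact hf (polyContent_le_iff.mpr fun n =>
          (IsLocalRing.mem_maximalIdeal _).mpr (h n))
      have hgc : ∀ q, g.coeff q ∈ IsLocalRing.maximalIdeal R :=
        fun q => polyContent_le_iff.mp hg q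
      have hle : polyContent g ≤ polyContent (f * g) :=
        polyContent_le_iff.mpr (coeff_mem_polyContent_mul hm g hfu hgc)
      have hft : polyContent f = ⊤ := by
        obtain ⟨n, hn⟩ := hfu
        exact Ideal.eq_top_of_isUnit_mem _ (mem_polyContent f n) hn
      refine le_antisymm (polyContent_mul_le f g) ?_
      rw [hft, Ideal.top_mul]
      exact hle
    · have hfu : ∃ n, IsUnit (f.coeff n) := by
        by_contra h
        push_neg at h
        exact hf (polyContent_le_iff.mpr fun n =>
          (IsLocalRing.mem_maximalIdeal _).mpr (h n))
      have hgu : ∃ n, IsUnit (g.coeff n) := by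
        by_contra h
        push_neg at h
        exact hg (polyContent_le_iff.mpr fun n =>
          (IsLocalRing.mem_maximalIdeal _).mpr (h n))
      obtain ⟨n, hn⟩ := isUnit_coeff_mul hfu hgu
      have hfgt : polyContent (f * g) = ⊤ :=
        Ideal.eq_top_of_isUnit_mem _ (mem_polyContent _ n) hn
      have hft : polyContent f = ⊤ := by
        obtain ⟨n, hn⟩ := hfu
        exact Ideal.eq_top_of_isUnit_mem _ (mem_polyContent f n) hn
      have hgt : polyContent g = ⊤ := by
        obtain ⟨n, hn⟩ := hgu
        exact Ideal.eq_top_of_isUnit_mem _ (mem_polyContent g n) hn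
      rw [hfgt, hft, hgt, Ideal.top_mul]
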